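/- Let N ≥ 2 and 2N/(N+1) < p < 2. Set λ = N(p−2)+p and α = N/(N(p−2)+p), and let C₀ > 0. Then the function F(y) = (C₀ + ((2−p)/p) λ^{−1/(p−1)} ∑ᵢ |yᵢ|^{p/(p−1)})^{−(p−1)/(2−p)} satisfies, for each i and at every point where yᵢ ≠ 0, the first-order relation |F_{yᵢ}|^{p−2} F_{yᵢ} + (α/N) yᵢ F = 0. -/

import Mathlib

/-- Partial derivative along the i-th coordinate direction. -/
noncomputable def pderiv' (N : ℕ) (i : Fin N) (u : (Fin N → ℝ) → ℝ) (y : Fin N → ℝ) : ℝ :=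
  deriv (fun t => u (Function.update y i t)) (y i)

/-- The explicit orthotropic Barenblatt profile satisfies the first-order relation
    |F_{yᵢ}|^{p-2} F_{yᵢ} + (α/N) yᵢ F = 0 away from the coordinate hyperplanes. -/
theorem stmt3 (N : ℕ) (hN : 2 ≤ N) (p lam α C₀ : ℝ)
    (hpc : 2 * N / ((N : ℝ) + 1) < p) (hp2 : p < 2)
    (hlam : lam = N * (p - 2) + p) (hα : α = (N : ℝ) / ((N : ℝ) * (p - 2) + p)) (hC : 0 < C₀)
    (F : (Fin N → ℝ) → ℝ)
    (hF : F = fun y =>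
      (C₀ + (2 - p) / p * lam ^ (-(1 : ℝ) / (p - 1)) * ∑ i, |y i| ^ (p / (p - 1)))
        ^ (-(p - 1) / (2 - p))) :
    ∀ (y : Fin N → ℝ) (i : Fin N), y i ≠ 0 →
      |pderiv' N i F y| ^ (p - 2) * pderiv' N i F y + (α / N) * y i * F y = 0 := by
  intro y i hs
  have hN2 : (2:ℝ) ≤ (N:ℝ) := by exact_mod_cast hN
  have hNpos : (0:ℝ) < N := by linarith
  have hp1 : 1 < p := by
    refine lt_trans ?_ hpc
    rw [lt_div_iff₀ (by linarith : (0:ℝ) < (N:ℝ) + 1)]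
    linarith
  have h2p : (0:ℝ) < 2 - p := by linarith
  have hp0 : (0:ℝ) < p := by linarith
  have hpm1 : (0:ℝ) < p - 1 := by linarith
  have hlam0 : 0 < lam := by
    have h2N : 2 * (N:ℝ) < p * ((N:ℝ) + 1) := by
      rwa [div_lt_iff₀ (by linarith : (0:ℝ) < (N:ℝ) + 1)] at hpc
    rw [hlam]; nlinarith
  set s := y i with hsdef
  set K := lam ^ (-(1 : ℝ) / (p - 1)) with hK
  have hK0 : 0 < K := Real.rpow_pos_of_pos hlam0 _
  set q := p / (p - 1) with hq
  set β := -(p - 1) / (2 - p) with hβ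
  set c := (2 - p) / p * K with hc
  have hc0 : 0 < c := by
    apply mul_pos (div_pos h2p hp0) hK0
  set B := ∑ j ∈ Finset.univ.erase i, |y j| ^ q with hB
  have hB0 : 0 ≤ B :=
    Finset.sum_nonneg fun j _ => Real.rpow_nonneg (abs_nonneg _) _
  have key : ∀ t, F (Function.update y i t) = (C₀ + c * (|t| ^ q + B)) ^ β := by
    intro t
    rw [hF]
    simp only
    congr 2
    rw [← Finset.add_sum_erase Finset.univ _ (Finset.mem_univ i), Function.update_self]
    have hcongr : ∀ x ∈ Finset.univ.erase i,
        |Function.update y i t x| ^ q = |y x| ^ q := fun j hj => by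
      rw [Function.update_of_ne (Finset.ne_of_mem_erase hj)]
    rw [Finset.sum_congr rfl hcongr, hB]
  set a := |s| with ha
  have ha0 : 0 < a := abs_pos.mpr hs
  set x0 := C₀ + c * (a ^ q + B) with hx0def
  have hx0 : 0 < x0 := by
    have : 0 ≤ c * (a ^ q + B) :=
      mul_nonneg hc0.le (add_nonneg (Real.rpow_nonneg (abs_nonneg _) _) hB0)
    linarith
  -- derivative of |t|^q at s
  have habs : HasDerivAt (fun t : ℝ => |t| ^ q) (q * a ^ (q - 2) * s) s := by
    rcases hs.lt_or_gt with h | h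
    · have h1 : HasDerivAt (fun t : ℝ => (-t) ^ q) (q * (-s) ^ (q - 1) * (-1)) s := by
        have := (Real.hasDerivAt_rpow_const (x := -s) (p := q)
          (Or.inl (neg_ne_zero.mpr hs))).comp s (hasDerivAt_neg s)
        simpa [Function.comp_def] using this
      have h2 : (fun t : ℝ => |t| ^ q) =ᶠ[nhds s] fun t => (-t) ^ q := by
        filter_upwards [Iio_mem_nhds h] with t ht
        rw [abs_of_neg ht]
      have e : q * (-s) ^ (q - 1) * (-1) = q * a ^ (q - 2) * s := by
        rw [ha, abs_of_neg h, show q - 1 = (q - 2) + 1 by ring,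
          Real.rpow_add_one (neg_ne_zero.mpr hs)]
        ring
      exact e ▸ h1.congr_of_eventuallyEq h2
    · have h1 : HasDerivAt (fun t : ℝ => t ^ q) (q * s ^ (q - 1)) s :=
        Real.hasDerivAt_rpow_const (Or.inl hs)
      have h2 : (fun t : ℝ => |t| ^ q) =ᶠ[nhds s] fun t => t ^ q := by
        filter_upwards [Ioi_mem_nhds h] with t ht
        rw [abs_of_pos ht]
      have e : q * s ^ (q - 1) = q * a ^ (q - 2) * s := by
        rw [ha, abs_of_pos h, show q - 1 = (q - 2) + 1 by ring,
          Real.rpow_add_one hs]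
        ring
      exact e ▸ h1.congr_of_eventuallyEq h2
  have hinner : HasDerivAt (fun t => C₀ + c * (|t| ^ q + B))
      (c * (q * a ^ (q - 2) * s)) s :=
    ((habs.add_const B).const_mul c).const_add C₀
  have hD : HasDerivAt (fun t => (C₀ + c * (|t| ^ q + B)) ^ β)
      (β * x0 ^ (β - 1) * (c * (q * a ^ (q - 2) * s))) s := by
    have h := hinner.rpow_const (p := β) (Or.inl hx0.ne')
    have e : c * (q * a ^ (q - 2) * s) * β * (C₀ + c * (|s| ^ q + B)) ^ (β - 1)
        = β * x0 ^ (β - 1) * (c * (q * a ^ (q - 2) * s)) := by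
      rw [hx0def, ha]; ring
    exact e ▸ h
  have hpd : pderiv' N i F y = β * x0 ^ (β - 1) * (c * (q * a ^ (q - 2) * s)) := by
    unfold pderiv'
    rw [funext key]
    exact hD.deriv
  have hFy : F y = x0 ^ β := by
    have h := key s
    rw [show Function.update y i s = y from Function.update_eq_self i y] at h
    rw [hx0def, ha]
    exact h
  -- constants
  have hβcq : β * (c * q) = -K := by
    rw [hβ, hc, hq]
    field_simp
  set E := K * x0 ^ (β - 1) * a ^ (q - 2) with hE
  have hE0 : 0 < E := by
    apply mul_pos (mul_pos hK0 (Real.rpow_pos_of_pos hx0 _)) (Real.rpow_pos_of_pos ha0 _)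
  have hDE : pderiv' N i F y = -(E * s) := by
    rw [hpd, hE]
    have h1 : β * x0 ^ (β - 1) * (c * (q * a ^ (q - 2) * s))
        = (β * (c * q)) * (x0 ^ (β - 1) * a ^ (q - 2) * s) := by ring
    rw [h1, hβcq]; ring
  have habsD : |pderiv' N i F y| = E * a := by
    rw [hDE, abs_neg, abs_mul, abs_of_pos hE0, ← ha]
  -- key exponent computation
  have hrp : ∀ u v w u' v' w' : ℝ,
      (lam ^ u * x0 ^ v * a ^ w) ^ (p - 2) * (lam ^ u' * x0 ^ v' * a ^ w')
        = lam ^ (u * (p - 2) + u') * x0 ^ (v * (p - 2) + v') * a ^ (w * (p - 2) + w') := by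
    intro u v w u' v' w'
    rw [Real.mul_rpow (by positivity) (by positivity),
        Real.mul_rpow (by positivity) (by positivity),
        ← Real.rpow_mul hlam0.le, ← Real.rpow_mul hx0.le, ← Real.rpow_mul ha0.le,
        Real.rpow_add hlam0, Real.rpow_add hx0, Real.rpow_add ha0]
    ring
  have hEa : E * a = lam ^ (-(1:ℝ) / (p - 1)) * x0 ^ (β - 1) * a ^ ((q - 2) + 1) := by
    rw [Real.rpow_add ha0, Real.rpow_one, hE, hK]; ring
  have hEe : E = lam ^ (-(1:ℝ) / (p - 1)) * x0 ^ (β - 1) * a ^ (q - 2) := by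
    rw [hE, hK]
  have eℓ : (-(1:ℝ) / (p - 1)) * (p - 2) + (-(1:ℝ) / (p - 1)) = -1 := by
    field_simp
    ring
  have ex : (β - 1) * (p - 2) + (β - 1) = β := by
    rw [hβ]; field_simp; ring
  have ea : ((q - 2) + 1) * (p - 2) + (q - 2) = 0 := by
    rw [hq]; field_simp; ring
  have hG : (E * a) ^ (p - 2) * E = lam⁻¹ * x0 ^ β := by
    rw [hEa, hEe, hrp, eℓ, ex, ea, Real.rpow_zero, Real.rpow_neg_one, mul_one]
  have hαN : α / N = lam⁻¹ := by
    rw [hα, ← hlam]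
    field_simp
  rw [habsD, hDE, hFy, hαN]
  have : (E * a) ^ (p - 2) * -(E * s) = -(((E * a) ^ (p - 2) * E) * s) := by ring
  rw [this, hG]
  ring
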